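/- There exists γ ∈ (0,1) such that: if y,z ∈ X, t₀ > 0 with d(y,z) < t₀, and a₁ ≤ P_{t₀}(x,y)/P_{t₀}(x,z) ≤ b₁ for all x ∈ X, then there exists a subinterval [a₂,b₂] ⊆ [a₁,b₁] with b₂ − a₂ = γ(b₁ − a₁) such that a₂ ≤ P_t(x,y)/P_t(x,z) ≤ b₂ for all t ≥ 2t₀ and all x ∈ X. -/

import Mathlib

open MeasureTheory Metric

set_option maxHeartbeats 1000000 in
/-- Interval-shrinking lemma for ratios of Poisson kernels: there is `γ ∈ (0,1)`
such that if `a₁ ≤ P_{t₀}(x,y)/P_{t₀}(x,z) ≤ b₁` for all `x` (with `d(y,z) < t₀`),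
then some subinterval `[a₂,b₂] ⊆ [a₁,b₁]` of length `γ(b₁−a₁)` contains
`P_t(x,y)/P_t(x,z)` for all `t ≥ 2t₀` and all `x`. -/
theorem poisson_ratio_interval_shrinks
    {X : Type*} [MetricSpace X] [MeasurableSpace X] [BorelSpace X]
    (μ : Measure X)
    (hvol : ∀ (x : X) (r : ℝ), 0 < r → 0 < (μ (closedBall x r)).toReal)
    (Cdbl : ℝ) (hCdbl : 0 < Cdbl)
    (hdouble : ∀ (x : X) (r : ℝ), 0 < r →
      (μ (closedBall x (2 * r))).toReal ≤ Cdbl * (μ (closedBall x r)).toReal)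
    (P : ℝ → X → X → ℝ)
    (hPnonneg : ∀ (t : ℝ), 0 < t → ∀ x y : X, 0 ≤ P t x y)
    (hPsymm : ∀ (t : ℝ), 0 < t → ∀ x y : X, P t x y = P t y x)
    (hPsemigroup : ∀ s t : ℝ, 0 < s → 0 < t → ∀ x y : X,
      P (s + t) x y = ∫ w, P s x w * P t w y ∂μ)
    (Cest : ℝ) (hCest : 0 < Cest)
    (hPest : ∀ (t : ℝ), 0 < t → ∀ x y : X,
      Cest⁻¹ * ((μ (closedBall x (t + dist x y))).toReal⁻¹ * (t / (t + dist x y)))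
          ≤ P t x y ∧
      P t x y ≤
        Cest * ((μ (closedBall x (t + dist x y))).toReal⁻¹ * (t / (t + dist x y))))
    (Ccmp : ℝ) (hCcmp : 0 < Ccmp)
    (hPcmp : ∀ (t : ℝ), 0 < t → ∀ x y z : X, dist y z ≤ t →
      Ccmp⁻¹ * P t x z ≤ P t x y ∧ P t x y ≤ Ccmp * P t x z) :
    ∃ γ ∈ Set.Ioo (0 : ℝ) 1, ∀ (y z : X) (t₀ a₁ b₁ : ℝ), 0 < t₀ → 0 < a₁ →
      dist y z < t₀ →
      (∀ x : X, a₁ ≤ P t₀ x y / P t₀ x z ∧ P t₀ x y / P t₀ x z ≤ b₁) →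
      ∃ a₂ b₂ : ℝ, a₁ ≤ a₂ ∧ b₂ ≤ b₁ ∧ b₂ - a₂ = γ * (b₁ - a₁) ∧
        ∀ t : ℝ, 2 * t₀ ≤ t →
          ∀ x : X, a₂ ≤ P t x y / P t x z ∧ P t x y / P t x z ≤ b₂ := by
  -- positivity of the kernel
  have hPpos : ∀ (t : ℝ), 0 < t → ∀ x y : X, 0 < P t x y := by
    intro t ht x y
    have h := (hPest t ht x y).1
    have hd : (0:ℝ) ≤ dist x y := dist_nonneg
    have hv := hvol x (t + dist x y) (by linarith)
    have : 0 < Cest⁻¹ * ((μ (closedBall x (t + dist x y))).toReal⁻¹ * (t / (t + dist x y))) := by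
      positivity
    linarith
  -- finiteness of volumes
  have hfin : ∀ (x : X) (r : ℝ), 0 < r → μ (closedBall x r) ≠ ⊤ := by
    intro x r hr h
    have := hvol x r hr
    rw [h] at this
    simp at this
  -- integrability of products from the semigroup identity
  have hInt : ∀ s t : ℝ, 0 < s → 0 < t → ∀ x y : X,
      Integrable (fun w => P s x w * P t w y) μ := by
    intro s t hs ht x y
    by_contra h
    have h0 := hPsemigroup s t hs ht x y
    rw [integral_undef h] at h0
    exact absurd h0 (ne_of_gt (hPpos (s+t) (by linarith) x y))
  -- the constant
  set m0 : ℝ := Cest⁻¹*Cest⁻¹*Cest⁻¹*Ccmp⁻¹*(Cdbl⁻¹)^4*(1/8) with hm0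
  have hm0pos : 0 < m0 := by positivity
  set δ : ℝ := min (Ccmp⁻¹*Ccmp⁻¹*m0) (1/2) with hδ
  have hδpos : 0 < δ := lt_min (by positivity) (by norm_num)
  have hδle : δ ≤ Ccmp⁻¹*Ccmp⁻¹*m0 := min_le_left _ _
  have hδhalf : δ ≤ 1/2 := min_le_right _ _
  refine ⟨1 - δ, ⟨by linarith, by linarith⟩, ?_⟩
  intro y z t₀ a₁ b₁ ht₀ ha₁ hyz hbd
  -- time parameters
  set σ : ℝ := t₀/4 with hσdef
  have hσ : 0 < σ := by positivity
  set τ : ℝ := σ + t₀ with hτdef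
  have hτ : 0 < τ := by positivity
  set ρ : ℝ := t₀/8 with hρdef
  have hρ : 0 < ρ := by positivity
  set B : Set X := closedBall z ρ with hB
  -- pointwise bounds at time t₀
  have hlow0 : ∀ u : X, a₁ * P t₀ u z ≤ P t₀ u y := by
    intro u
    have h := (hbd u).1
    have hz := hPpos t₀ ht₀ u z
    rw [le_div_iff₀ hz] at h
    linarith
  have hup0 : ∀ u : X, P t₀ u y ≤ b₁ * P t₀ u z := by
    intro u
    have h := (hbd u).2
    have hz := hPpos t₀ ht₀ u z
    rw [div_le_iff₀ hz] at h
    linarith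
  -- bounds at any time s + t₀
  have hprop : ∀ s : ℝ, 0 < s → ∀ x : X,
      a₁ * P (s + t₀) x z ≤ P (s + t₀) x y ∧ P (s + t₀) x y ≤ b₁ * P (s + t₀) x z := by
    intro s hs x
    have hiy := hInt s t₀ hs ht₀ x y
    have hiz := hInt s t₀ hs ht₀ x z
    have ey := hPsemigroup s t₀ hs ht₀ x y
    have ez := hPsemigroup s t₀ hs ht₀ x z
    constructor
    · have : a₁ * ∫ w, P s x w * P t₀ w z ∂μ ≤ ∫ w, P s x w * P t₀ w y ∂μ := by
        rw [← integral_const_mul]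
        refine integral_mono (hiz.const_mul a₁) hiy ?_
        intro w
        have := hlow0 w
        have hps := hPnonneg s hs x w
        calc a₁ * (P s x w * P t₀ w z) = P s x w * (a₁ * P t₀ w z) := by ring
          _ ≤ P s x w * P t₀ w y := mul_le_mul_of_nonneg_left this hps
      rw [ey, ez]; exact this
    · have : ∫ w, P s x w * P t₀ w y ∂μ ≤ b₁ * ∫ w, P s x w * P t₀ w z ∂μ := by
        rw [← integral_const_mul]
        refine integral_mono hiy (hiz.const_mul b₁) ?_
        intro w
        have := hup0 w
        have hps := hPnonneg s hs x w
        calc P s x w * P t₀ w y ≤ P s x w * (b₁ * P t₀ w z) :=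
              mul_le_mul_of_nonneg_left this hps
          _ = b₁ * (P s x w * P t₀ w z) := by ring
      rw [ey, ez]; exact this
  -- F := P τ · y - a₁ P τ · z and H := b₁ P τ · z - P τ · y at time τ = σ + t₀
  have hFnn : ∀ w : X, 0 ≤ P τ w y - a₁ * P τ w z := by
    intro w; have := (hprop σ hσ w).1; rw [hτdef]; linarith [(hprop σ hσ w).1]
  have hHnn : ∀ w : X, 0 ≤ b₁ * P τ w z - P τ w y := by
    intro w; have := (hprop σ hσ w).2; rw [hτdef]; linarith [(hprop σ hσ w).2]
  -- integral representation of F and H at time τ via the σ-smoothing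
  have hFrep : ∀ w : X, P τ w y - a₁ * P τ w z
      = ∫ u, P σ w u * (P t₀ u y - a₁ * P t₀ u z) ∂μ := by
    intro w
    have hiy := hInt σ t₀ hσ ht₀ w y
    have hiz := hInt σ t₀ hσ ht₀ w z
    have : (fun u => P σ w u * (P t₀ u y - a₁ * P t₀ u z))
        = fun u => P σ w u * P t₀ u y - a₁ * (P σ w u * P t₀ u z) := by
      funext u; ring
    rw [this, integral_sub hiy (hiz.const_mul a₁), integral_const_mul,
      ← hPsemigroup σ t₀ hσ ht₀ w y, ← hPsemigroup σ t₀ hσ ht₀ w z, hτdef]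
  have hHrep : ∀ w : X, b₁ * P τ w z - P τ w y
      = ∫ u, P σ w u * (b₁ * P t₀ u z - P t₀ u y) ∂μ := by
    intro w
    have hiy := hInt σ t₀ hσ ht₀ w y
    have hiz := hInt σ t₀ hσ ht₀ w z
    have : (fun u => P σ w u * (b₁ * P t₀ u z - P t₀ u y))
        = fun u => b₁ * (P σ w u * P t₀ u z) - P σ w u * P t₀ u y := by
      funext u; ring
    rw [this, integral_sub (hiz.const_mul b₁) hiy, integral_const_mul,
      ← hPsemigroup σ t₀ hσ ht₀ w y, ← hPsemigroup σ t₀ hσ ht₀ w z, hτdef]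
  -- Harnack for F and H at scale σ
  have hFH : ∀ w w' : X, dist w w' ≤ σ →
      Ccmp⁻¹ * (P τ w' y - a₁ * P τ w' z) ≤ P τ w y - a₁ * P τ w z := by
    intro w w' hd
    rw [hFrep w, hFrep w', ← integral_const_mul]
    have hiy := hInt σ t₀ hσ ht₀ w y
    have hiz := hInt σ t₀ hσ ht₀ w z
    have hiy' := hInt σ t₀ hσ ht₀ w' y
    have hiz' := hInt σ t₀ hσ ht₀ w' z
    have hint1 : Integrable (fun u => P σ w u * (P t₀ u y - a₁ * P t₀ u z)) μ := by
      have : (fun u => P σ w u * (P t₀ u y - a₁ * P t₀ u z))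
          = fun u => P σ w u * P t₀ u y - a₁ * (P σ w u * P t₀ u z) := by funext u; ring
      rw [this]; exact hiy.sub (hiz.const_mul a₁)
    have hint2 : Integrable (fun u => P σ w' u * (P t₀ u y - a₁ * P t₀ u z)) μ := by
      have : (fun u => P σ w' u * (P t₀ u y - a₁ * P t₀ u z))
          = fun u => P σ w' u * P t₀ u y - a₁ * (P σ w' u * P t₀ u z) := by funext u; ring
      rw [this]; exact hiy'.sub (hiz'.const_mul a₁)
    refine integral_mono (hint2.const_mul _) hint1 ?_
    intro u
    have hF0 : 0 ≤ P t₀ u y - a₁ * P t₀ u z := by linarith [hlow0 u]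
    have hcmp : Ccmp⁻¹ * P σ u w' ≤ P σ u w := (hPcmp σ hσ u w w' hd).1
    calc Ccmp⁻¹ * (P σ w' u * (P t₀ u y - a₁ * P t₀ u z))
        = (Ccmp⁻¹ * P σ u w') * (P t₀ u y - a₁ * P t₀ u z) := by
          rw [hPsymm σ hσ w' u]; ring
      _ ≤ P σ u w * (P t₀ u y - a₁ * P t₀ u z) := mul_le_mul_of_nonneg_right hcmp hF0
      _ = P σ w u * (P t₀ u y - a₁ * P t₀ u z) := by rw [hPsymm σ hσ u w]
  have hHH : ∀ w w' : X, dist w w' ≤ σ →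
      Ccmp⁻¹ * (b₁ * P τ w' z - P τ w' y) ≤ b₁ * P τ w z - P τ w y := by
    intro w w' hd
    rw [hHrep w, hHrep w', ← integral_const_mul]
    have hiy := hInt σ t₀ hσ ht₀ w y
    have hiz := hInt σ t₀ hσ ht₀ w z
    have hiy' := hInt σ t₀ hσ ht₀ w' y
    have hiz' := hInt σ t₀ hσ ht₀ w' z
    have hint1 : Integrable (fun u => P σ w u * (b₁ * P t₀ u z - P t₀ u y)) μ := by
      have : (fun u => P σ w u * (b₁ * P t₀ u z - P t₀ u y))
          = fun u => b₁ * (P σ w u * P t₀ u z) - P σ w u * P t₀ u y := by funext u; ring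
      rw [this]; exact (hiz.const_mul b₁).sub hiy
    have hint2 : Integrable (fun u => P σ w' u * (b₁ * P t₀ u z - P t₀ u y)) μ := by
      have : (fun u => P σ w' u * (b₁ * P t₀ u z - P t₀ u y))
          = fun u => b₁ * (P σ w' u * P t₀ u z) - P σ w' u * P t₀ u y := by funext u; ring
      rw [this]; exact (hiz'.const_mul b₁).sub hiy'
    refine integral_mono (hint2.const_mul _) hint1 ?_
    intro u
    have hH0 : 0 ≤ b₁ * P t₀ u z - P t₀ u y := by linarith [hup0 u]
    have hcmp : Ccmp⁻¹ * P σ u w' ≤ P σ u w := (hPcmp σ hσ u w w' hd).1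
    calc Ccmp⁻¹ * (P σ w' u * (b₁ * P t₀ u z - P t₀ u y))
        = (Ccmp⁻¹ * P σ u w') * (b₁ * P t₀ u z - P t₀ u y) := by
          rw [hPsymm σ hσ w' u]; ring
      _ ≤ P σ u w * (b₁ * P t₀ u z - P t₀ u y) := mul_le_mul_of_nonneg_right hcmp hH0
      _ = P σ w u * (b₁ * P t₀ u z - P t₀ u y) := by rw [hPsymm σ hσ u w]
  -- the reference value
  set gz : ℝ := P τ z y / P τ z z with hgz
  have hPzz : 0 < P τ z z := hPpos τ hτ z z
  have hgz_lo : a₁ ≤ gz := by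
    rw [hgz, le_div_iff₀ hPzz]
    have := (hprop σ hσ z).1
    rw [← hτdef] at this
    linarith
  have hgz_hi : gz ≤ b₁ := by
    rw [hgz, div_le_iff₀ hPzz]
    have := (hprop σ hσ z).2
    rw [← hτdef] at this
    linarith
  have hFz : P τ z y - a₁ * P τ z z = (gz - a₁) * P τ z z := by
    rw [hgz]; field_simp
  have hHz : b₁ * P τ z z - P τ z y = (b₁ - gz) * P τ z z := by
    rw [hgz]; field_simp
  -- pointwise lower bounds for F, H on B
  have hFB : ∀ w ∈ B, Ccmp⁻¹ * Ccmp⁻¹ * (gz - a₁) * P τ w z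
      ≤ P τ w y - a₁ * P τ w z := by
    intro w hw
    have hdwz : dist w z ≤ ρ := mem_closedBall.mp hw
    have h1 : Ccmp⁻¹ * (P τ z y - a₁ * P τ z z) ≤ P τ w y - a₁ * P τ w z :=
      hFH w z (by rw [hσdef]; rw [hρdef] at hdwz; linarith)
    have h2 : Ccmp⁻¹ * P τ z w ≤ P τ z z := (hPcmp τ hτ z z w (by
      rw [dist_comm]; rw [hρdef] at hdwz; rw [hτdef, hσdef]; linarith)).1
    have h3 : P τ z w = P τ w z := hPsymm τ hτ z w
    have hga : 0 ≤ gz - a₁ := by linarith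
    calc Ccmp⁻¹ * Ccmp⁻¹ * (gz - a₁) * P τ w z
        = Ccmp⁻¹ * ((gz - a₁) * (Ccmp⁻¹ * P τ z w)) := by rw [h3]; ring
      _ ≤ Ccmp⁻¹ * ((gz - a₁) * P τ z z) := by
          refine mul_le_mul_of_nonneg_left (mul_le_mul_of_nonneg_left h2 hga) (by positivity)
      _ = Ccmp⁻¹ * (P τ z y - a₁ * P τ z z) := by rw [hFz]
      _ ≤ P τ w y - a₁ * P τ w z := h1
  have hHB : ∀ w ∈ B, Ccmp⁻¹ * Ccmp⁻¹ * (b₁ - gz) * P τ w z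
      ≤ b₁ * P τ w z - P τ w y := by
    intro w hw
    have hdwz : dist w z ≤ ρ := mem_closedBall.mp hw
    have h1 : Ccmp⁻¹ * (b₁ * P τ z z - P τ z y) ≤ b₁ * P τ w z - P τ w y :=
      hHH w z (by rw [hσdef]; rw [hρdef] at hdwz; linarith)
    have h2 : Ccmp⁻¹ * P τ z w ≤ P τ z z := (hPcmp τ hτ z z w (by
      rw [dist_comm]; rw [hρdef] at hdwz; rw [hτdef, hσdef]; linarith)).1
    have h3 : P τ z w = P τ w z := hPsymm τ hτ z w
    have hgb : 0 ≤ b₁ - gz := by linarith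
    calc Ccmp⁻¹ * Ccmp⁻¹ * (b₁ - gz) * P τ w z
        = Ccmp⁻¹ * ((b₁ - gz) * (Ccmp⁻¹ * P τ z w)) := by rw [h3]; ring
      _ ≤ Ccmp⁻¹ * ((b₁ - gz) * P τ z z) := by
          refine mul_le_mul_of_nonneg_left (mul_le_mul_of_nonneg_left h2 hgb) (by positivity)
      _ = Ccmp⁻¹ * (b₁ * P τ z z - P τ z y) := by rw [hHz]
      _ ≤ b₁ * P τ w z - P τ w y := h1
  -- uniform mass lower bound
  have hMass : ∀ s : ℝ, 3/4 * t₀ ≤ s → ∀ x : X,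
      m0 * P (s + τ) x z ≤ ∫ w in B, P s x w * P τ w z ∂μ := by
    intro s hs x
    have hs0 : 0 < s := by linarith
    have hT : 0 < s + τ := by linarith
    set m : ℝ := (μ (closedBall z (2*t₀))).toReal with hm
    have hmpos : 0 < m := hvol z (2*t₀) (by linarith)
    -- the kernel lower bound P s x z ≥ c * P (s+τ) x z
    have hPs : Cest⁻¹*Cest⁻¹*(1/4) * P (s + τ) x z ≤ P s x z := by
      set d : ℝ := dist x z with hd
      have hd0 : (0:ℝ) ≤ d := dist_nonneg
      set Vs : ℝ := (μ (closedBall x (s + d))).toReal with hVs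
      set Vt : ℝ := (μ (closedBall x ((s + τ) + d))).toReal with hVt
      have hVspos : 0 < Vs := hvol x (s + d) (by linarith)
      have hVtpos : 0 < Vt := hvol x ((s + τ) + d) (by linarith)
      have h1 : Cest⁻¹ * (Vs⁻¹ * (s/(s+d))) ≤ P s x z := (hPest s hs0 x z).1
      have h2 : P (s + τ) x z ≤ Cest * (Vt⁻¹ * ((s+τ)/((s+τ)+d))) := (hPest (s+τ) hT x z).2
      have hVle : Vs ≤ Vt := by
        refine ENNReal.toReal_mono (hfin x ((s+τ)+d) (by linarith)) ?_
        exact measure_mono (closedBall_subset_closedBall (by linarith))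
      have hVinv : Vt⁻¹ ≤ Vs⁻¹ := by
        exact inv_anti₀ hVspos hVle
      have hτle : τ ≤ 5/3 * s := by
        rw [hτdef, hσdef]; linarith
      have hfrac : (1/4) * ((s+τ)/((s+τ)+d)) ≤ s/(s+d) := by
        rw [show (1/4) * ((s+τ)/((s+τ)+d)) = ((1/4)*(s+τ))/((s+τ)+d) by ring,
          div_le_div_iff₀ (by linarith) (by linarith)]
        nlinarith [mul_nonneg hd0 (by linarith : (0:ℝ) ≤ 5/3*s - τ), sq_nonneg s,
          mul_pos hs0 hs0, mul_nonneg hs0.le hd0]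
      have h2' : Cest⁻¹ * P (s + τ) x z ≤ Vt⁻¹ * ((s+τ)/((s+τ)+d)) := by
        have := mul_le_mul_of_nonneg_left h2 (inv_nonneg.mpr hCest.le)
        rwa [← mul_assoc, inv_mul_cancel₀ (ne_of_gt hCest), one_mul] at this
      have hfracT : (0:ℝ) ≤ (s+τ)/((s+τ)+d) := by positivity
      calc Cest⁻¹*Cest⁻¹*(1/4) * P (s + τ) x z
          = Cest⁻¹*(1/4) * (Cest⁻¹ * P (s + τ) x z) := by ring
        _ ≤ Cest⁻¹*(1/4) * (Vt⁻¹ * ((s+τ)/((s+τ)+d))) := by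
            refine mul_le_mul_of_nonneg_left h2' (by positivity)
        _ = Cest⁻¹ * (Vt⁻¹ * ((1/4) * ((s+τ)/((s+τ)+d)))) := by ring
        _ ≤ Cest⁻¹ * (Vs⁻¹ * (s/(s+d))) := by
            refine mul_le_mul_of_nonneg_left ?_ (by positivity)
            refine mul_le_mul hVinv hfrac (by positivity) (by positivity)
        _ ≤ P s x z := h1
    -- pointwise lower bound on B
    have hpt : ∀ w ∈ B, (Ccmp⁻¹ * P s x z) * (Cest⁻¹ * (m⁻¹ * (1/2)))
        ≤ P s x w * P τ w z := by
      intro w hw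
      have hdwz : dist w z ≤ ρ := mem_closedBall.mp hw
      have h1 : Ccmp⁻¹ * P s x z ≤ P s x w :=
        (hPcmp s hs0 x w z (by rw [hρdef] at hdwz; linarith)).1
      have hdzw : dist z w ≤ ρ := by rw [dist_comm]; exact hdwz
      have hdzw0 : (0:ℝ) ≤ dist z w := dist_nonneg
      have h2 : Cest⁻¹ * (m⁻¹ * (1/2)) ≤ P τ w z := by
        rw [hPsymm τ hτ w z]
        have h3 := (hPest τ hτ z w).1
        have hVle : (μ (closedBall z (τ + dist z w))).toReal ≤ m := by
          refine ENNReal.toReal_mono (hfin z (2*t₀) (by linarith)) ?_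
          refine measure_mono (closedBall_subset_closedBall ?_)
          rw [hτdef, hσdef]; rw [hρdef] at hdzw; linarith
        have hVpos : 0 < (μ (closedBall z (τ + dist z w))).toReal :=
          hvol z _ (by linarith)
        have hVinv : m⁻¹ ≤ (μ (closedBall z (τ + dist z w))).toReal⁻¹ :=
          inv_anti₀ hVpos hVle
        have hfrac : (1/2 : ℝ) ≤ τ / (τ + dist z w) := by
          rw [le_div_iff₀ (by linarith)]
          rw [hτdef, hσdef]; rw [hρdef] at hdzw; linarith
        refine le_trans ?_ h3
        refine mul_le_mul_of_nonneg_left ?_ (by positivity)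
        exact mul_le_mul hVinv hfrac (by norm_num) (by positivity)
      exact mul_le_mul h1 h2 (by positivity) (hPnonneg s hs0 x w)
    -- integrate over B
    have hμB : μ B ≠ ⊤ := hfin z ρ hρ
    have hμBpos : 0 < (μ B).toReal := hvol z ρ hρ
    have hIB : IntegrableOn (fun w => P s x w * P τ w z) B μ :=
      (hInt s τ hs0 hτ x z).integrableOn
    have hIC : IntegrableOn (fun _ : X => (Ccmp⁻¹ * P s x z) * (Cest⁻¹ * (m⁻¹ * (1/2)))) B μ :=
      integrableOn_const hμB
    have hint : ∫ _ in B, (Ccmp⁻¹ * P s x z) * (Cest⁻¹ * (m⁻¹ * (1/2))) ∂μ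
        ≤ ∫ w in B, P s x w * P τ w z ∂μ :=
      setIntegral_mono_on hIC hIB measurableSet_closedBall hpt
    rw [setIntegral_const, smul_eq_mul] at hint
    -- doubling chain
    have q1 : (μ (closedBall z (t₀/4))).toReal ≤ Cdbl * (μ (closedBall z (t₀/8))).toReal := by
      have := hdouble z (t₀/8) (by positivity)
      rwa [show 2*(t₀/8) = t₀/4 by ring] at this
    have q2 : (μ (closedBall z (t₀/2))).toReal ≤ Cdbl * (μ (closedBall z (t₀/4))).toReal := by
      have := hdouble z (t₀/4) (by positivity)
      rwa [show 2*(t₀/4) = t₀/2 by ring] at this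
    have q3 : (μ (closedBall z t₀)).toReal ≤ Cdbl * (μ (closedBall z (t₀/2))).toReal := by
      have := hdouble z (t₀/2) (by positivity)
      rwa [show 2*(t₀/2) = t₀ by ring] at this
    have q4 : m ≤ Cdbl * (μ (closedBall z t₀)).toReal := hdouble z t₀ ht₀
    have hA1 : (0:ℝ) ≤ (μ (closedBall z (t₀/4))).toReal := ENNReal.toReal_nonneg
    have hA2 : (0:ℝ) ≤ (μ (closedBall z (t₀/2))).toReal := ENNReal.toReal_nonneg
    have hA3 : (0:ℝ) ≤ (μ (closedBall z t₀)).toReal := ENNReal.toReal_nonneg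
    have hdbl : m ≤ Cdbl^4 * (μ B).toReal := by
      have hBρ : B = closedBall z (t₀/8) := by rw [hB, hρdef]
      rw [hBρ]
      calc m ≤ Cdbl * (μ (closedBall z t₀)).toReal := q4
        _ ≤ Cdbl * (Cdbl * (μ (closedBall z (t₀/2))).toReal) :=
            mul_le_mul_of_nonneg_left q3 hCdbl.le
        _ ≤ Cdbl * (Cdbl * (Cdbl * (μ (closedBall z (t₀/4))).toReal)) := by
            refine mul_le_mul_of_nonneg_left (mul_le_mul_of_nonneg_left q2 hCdbl.le) hCdbl.le
        _ ≤ Cdbl * (Cdbl * (Cdbl * (Cdbl * (μ (closedBall z (t₀/8))).toReal))) := by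
            refine mul_le_mul_of_nonneg_left (mul_le_mul_of_nonneg_left
              (mul_le_mul_of_nonneg_left q1 hCdbl.le) hCdbl.le) hCdbl.le
        _ = Cdbl^4 * (μ (closedBall z (t₀/8))).toReal := by ring
    have hμBge : Cdbl⁻¹^4 * m ≤ (μ B).toReal := by
      rw [show Cdbl⁻¹^4 * m = (Cdbl^4)⁻¹ * m by ring]
      rw [inv_mul_le_iff₀ (by positivity)]
      linarith [hdbl]
    -- assemble
    have hPT0 : (0:ℝ) ≤ P (s + τ) x z := hPnonneg (s+τ) hT x z
    calc m0 * P (s + τ) x z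
        = (Cdbl⁻¹^4 * m) * ((Ccmp⁻¹ * (Cest⁻¹*Cest⁻¹*(1/4) * P (s + τ) x z))
            * (Cest⁻¹ * (m⁻¹ * (1/2)))) := by
          rw [hm0]; field_simp; ring
      _ ≤ (μ B).toReal * ((Ccmp⁻¹ * P s x z) * (Cest⁻¹ * (m⁻¹ * (1/2)))) := by
          refine mul_le_mul hμBge ?_ ?_ ENNReal.toReal_nonneg
          · refine mul_le_mul_of_nonneg_right
              (mul_le_mul_of_nonneg_left hPs (by positivity)) (by positivity)
          · have hfoo : (0:ℝ) ≤ Ccmp⁻¹ * (Cest⁻¹*Cest⁻¹*(1/4) * P (s + τ) x z) := by positivity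
            positivity
      _ ≤ ∫ w in B, P s x w * P τ w z ∂μ := hint
  -- the key estimates for each t ≥ 2 t₀ and x
  have hKey : ∀ t : ℝ, 2 * t₀ ≤ t → ∀ x : X,
      δ * (gz - a₁) * P t x z ≤ P t x y - a₁ * P t x z ∧
      δ * (b₁ - gz) * P t x z ≤ b₁ * P t x z - P t x y := by
    intro t ht x
    set s : ℝ := t - τ with hsdef
    have hs34 : 3/4 * t₀ ≤ s := by rw [hsdef, hτdef, hσdef]; linarith
    have hs0 : 0 < s := by linarith
    have hts : t = s + τ := by rw [hsdef]; ring
    have hiy : Integrable (fun w => P s x w * P τ w y) μ := hInt s τ hs0 hτ x y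
    have hiz : Integrable (fun w => P s x w * P τ w z) μ := hInt s τ hs0 hτ x z
    have hey : P t x y = ∫ w, P s x w * P τ w y ∂μ := by
      rw [hts]; exact hPsemigroup s τ hs0 hτ x y
    have hez : P t x z = ∫ w, P s x w * P τ w z ∂μ := by
      rw [hts]; exact hPsemigroup s τ hs0 hτ x z
    have hPz : (0:ℝ) ≤ P t x z := hPnonneg t (by linarith) x z
    have hga : (0:ℝ) ≤ gz - a₁ := by linarith
    have hgb : (0:ℝ) ≤ b₁ - gz := by linarith
    have hMass' : m0 * P t x z ≤ ∫ w in B, P s x w * P τ w z ∂μ := by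
      have := hMass s hs34 x
      rwa [← hts] at this
    constructor
    · -- lower bound
      have hIntF : Integrable (fun w => P s x w * (P τ w y - a₁ * P τ w z)) μ := by
        have : (fun w => P s x w * (P τ w y - a₁ * P τ w z))
            = fun w => P s x w * P τ w y - a₁ * (P s x w * P τ w z) := by funext w; ring
        rw [this]; exact hiy.sub (hiz.const_mul a₁)
      have N_eq : P t x y - a₁ * P t x z
          = ∫ w, P s x w * (P τ w y - a₁ * P τ w z) ∂μ := by
        have : (fun w => P s x w * (P τ w y - a₁ * P τ w z))
            = fun w => P s x w * P τ w y - a₁ * (P s x w * P τ w z) := by funext w; ring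
        rw [this, integral_sub hiy (hiz.const_mul a₁), integral_const_mul, ← hey, ← hez]
      have hset1 : ∫ w in B, P s x w * (P τ w y - a₁ * P τ w z) ∂μ
          ≤ ∫ w, P s x w * (P τ w y - a₁ * P τ w z) ∂μ :=
        setIntegral_le_integral hIntF (Filter.Eventually.of_forall fun w =>
          mul_nonneg (hPnonneg s hs0 x w) (hFnn w))
      have hset2 : ∫ w in B, (Ccmp⁻¹ * Ccmp⁻¹ * (gz - a₁)) * (P s x w * P τ w z) ∂μ
          ≤ ∫ w in B, P s x w * (P τ w y - a₁ * P τ w z) ∂μ := by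
        refine setIntegral_mono_on ((hiz.const_mul _).integrableOn)
          hIntF.integrableOn measurableSet_closedBall ?_
        intro w hw
        have h1 := hFB w hw
        have h2 := hPnonneg s hs0 x w
        calc (Ccmp⁻¹ * Ccmp⁻¹ * (gz - a₁)) * (P s x w * P τ w z)
            = P s x w * (Ccmp⁻¹ * Ccmp⁻¹ * (gz - a₁) * P τ w z) := by ring
          _ ≤ P s x w * (P τ w y - a₁ * P τ w z) := mul_le_mul_of_nonneg_left h1 h2
      calc δ * (gz - a₁) * P t x z
          = δ * ((gz - a₁) * P t x z) := by ring
        _ ≤ (Ccmp⁻¹*Ccmp⁻¹*m0) * ((gz - a₁) * P t x z) :=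
            mul_le_mul_of_nonneg_right hδle (mul_nonneg hga hPz)
        _ = (Ccmp⁻¹ * Ccmp⁻¹ * (gz - a₁)) * (m0 * P t x z) := by ring
        _ ≤ (Ccmp⁻¹ * Ccmp⁻¹ * (gz - a₁)) * ∫ w in B, P s x w * P τ w z ∂μ := by
            refine mul_le_mul_of_nonneg_left hMass' ?_
            positivity
        _ = ∫ w in B, (Ccmp⁻¹ * Ccmp⁻¹ * (gz - a₁)) * (P s x w * P τ w z) ∂μ :=
            (integral_const_mul _ _).symm
        _ ≤ ∫ w in B, P s x w * (P τ w y - a₁ * P τ w z) ∂μ := hset2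
        _ ≤ ∫ w, P s x w * (P τ w y - a₁ * P τ w z) ∂μ := hset1
        _ = P t x y - a₁ * P t x z := N_eq.symm
    · -- upper bound
      have hIntH : Integrable (fun w => P s x w * (b₁ * P τ w z - P τ w y)) μ := by
        have : (fun w => P s x w * (b₁ * P τ w z - P τ w y))
            = fun w => b₁ * (P s x w * P τ w z) - P s x w * P τ w y := by funext w; ring
        rw [this]; exact (hiz.const_mul b₁).sub hiy
      have N_eq : b₁ * P t x z - P t x y
          = ∫ w, P s x w * (b₁ * P τ w z - P τ w y) ∂μ := by
        have : (fun w => P s x w * (b₁ * P τ w z - P τ w y))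
            = fun w => b₁ * (P s x w * P τ w z) - P s x w * P τ w y := by funext w; ring
        rw [this, integral_sub (hiz.const_mul b₁) hiy, integral_const_mul, ← hey, ← hez]
      have hset1 : ∫ w in B, P s x w * (b₁ * P τ w z - P τ w y) ∂μ
          ≤ ∫ w, P s x w * (b₁ * P τ w z - P τ w y) ∂μ :=
        setIntegral_le_integral hIntH (Filter.Eventually.of_forall fun w =>
          mul_nonneg (hPnonneg s hs0 x w) (hHnn w))
      have hset2 : ∫ w in B, (Ccmp⁻¹ * Ccmp⁻¹ * (b₁ - gz)) * (P s x w * P τ w z) ∂μ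
          ≤ ∫ w in B, P s x w * (b₁ * P τ w z - P τ w y) ∂μ := by
        refine setIntegral_mono_on ((hiz.const_mul _).integrableOn)
          hIntH.integrableOn measurableSet_closedBall ?_
        intro w hw
        have h1 := hHB w hw
        have h2 := hPnonneg s hs0 x w
        calc (Ccmp⁻¹ * Ccmp⁻¹ * (b₁ - gz)) * (P s x w * P τ w z)
            = P s x w * (Ccmp⁻¹ * Ccmp⁻¹ * (b₁ - gz) * P τ w z) := by ring
          _ ≤ P s x w * (b₁ * P τ w z - P τ w y) := mul_le_mul_of_nonneg_left h1 h2
      calc δ * (b₁ - gz) * P t x z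
          = δ * ((b₁ - gz) * P t x z) := by ring
        _ ≤ (Ccmp⁻¹*Ccmp⁻¹*m0) * ((b₁ - gz) * P t x z) :=
            mul_le_mul_of_nonneg_right hδle (mul_nonneg hgb hPz)
        _ = (Ccmp⁻¹ * Ccmp⁻¹ * (b₁ - gz)) * (m0 * P t x z) := by ring
        _ ≤ (Ccmp⁻¹ * Ccmp⁻¹ * (b₁ - gz)) * ∫ w in B, P s x w * P τ w z ∂μ := by
            refine mul_le_mul_of_nonneg_left hMass' ?_
            positivity
        _ = ∫ w in B, (Ccmp⁻¹ * Ccmp⁻¹ * (b₁ - gz)) * (P s x w * P τ w z) ∂μ :=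
            (integral_const_mul _ _).symm
        _ ≤ ∫ w in B, P s x w * (b₁ * P τ w z - P τ w y) ∂μ := hset2
        _ ≤ ∫ w, P s x w * (b₁ * P τ w z - P τ w y) ∂μ := hset1
        _ = b₁ * P t x z - P t x y := N_eq.symm
  -- conclusion
  clear_value m0 δ σ τ ρ B gz
  refine ⟨a₁ + δ * (gz - a₁), b₁ - δ * (b₁ - gz), by nlinarith [hδpos, hgz_lo], by nlinarith [hδpos, hgz_hi], by ring, ?_⟩
  intro t ht x
  have hz := hPpos t (by linarith) x z
  have h := hKey t ht x
  constructor
  · rw [le_div_iff₀ hz]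
    have h1 := h.1
    ring_nf
    ring_nf at h1
    linarith
  · rw [div_le_iff₀ hz]
    have h2 := h.2
    ring_nf
    ring_nf at h2
    linarith
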